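/- (Non-existence for affine growth and constant fragmentation.) Let τ₀ > 0, τ₁ ≥ 0, β₀ > 0, let τ(x) = τ₀ + τ₁x and β ≡ β₀, and let κ be a fragmentation kernel satisfying (K1) and (K2). Suppose (λ,U) solves the truncated eigenproblem on (0,∞) (R = ∞) with inflow δ = 0 in integrated form, with U ≥ 0, ∫₀^∞ U = 1, xU ∈ L¹(0,∞), and τ(x)U(x) → 0 and x·τ(x)U(x) → 0 as x → ∞. Then λ = β₀ and (β₀ − τ₁)·∫₀^∞ xU(x)dx = τ₀; in particular β₀ > τ₁, so if τ₁ ≥ β₀ then no such (λ,U) with xU ∈ L¹ exists. -/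

import Mathlib

open MeasureTheory Set Filter
open scoped ENNReal NNReal

noncomputable section

/-- The kernel `κ(·,y)` is supported in `[0,y]`. -/
def KernelSupport (κ : ℝ → Measure ℝ) : Prop :=
  ∀ y : ℝ, 0 < y → κ y (Set.Icc 0 y)ᶜ = 0

/-- Measurability of `y ↦ ∫ ψ dκ(·,y)` for continuous `ψ`. -/
def KernelMeasurable (κ : ℝ → Measure ℝ) : Prop :=
  ∀ ψ : ℝ → ℝ, Continuous ψ → Measurable fun y => ∫ x, ψ x ∂(κ y)

/-- (K1): `κ(·,y)` is a probability measure. -/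
def K1 (κ : ℝ → Measure ℝ) : Prop := ∀ y : ℝ, 0 < y → IsProbabilityMeasure (κ y)

/-- (K2): `∫ x dκ(x,y) = y/2`. -/
def K2 (κ : ℝ → Measure ℝ) : Prop := ∀ y : ℝ, 0 < y → ∫ x, x ∂(κ y) = y / 2

/-- The class `P` of nonnegative measurable functions with polynomial upper and
lower control at infinity. -/
def MemP (f : ℝ → ℝ) : Prop :=
  Measurable f ∧ (∀ x : ℝ, 0 < x → 0 ≤ f x) ∧
  (∃ μ : ℝ, 0 ≤ μ ∧ ∃ M : ℝ, ∀ᶠ x in atTop, x ^ (-μ) * f x ≤ M) ∧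
  (∃ ν : ℝ, 0 ≤ ν ∧ ∃ ε : ℝ, 0 < ε ∧ ∀ᶠ x in atTop, ε ≤ x ^ ν * f x)

/-- `(lam, U)` solves the truncated eigenproblem, in integrated form with inflow
`δ`, on the interval `S` (`S = (0,R)`, or `S = (0,∞)` for `R = ∞`):
for a.e. `x ∈ S`,
`τ(x)U(x) + λ∫₀ˣU + ∫₀ˣβU = δ + 2∫_S β(y)U(y) κ([0,x],y) dy`. -/
def TruncEigen (τ β : ℝ → ℝ) (κ : ℝ → Measure ℝ) (δ : ℝ) (S : Set ℝ)
    (lam : ℝ) (U : ℝ → ℝ) : Prop :=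
  IntegrableOn U S ∧ IntegrableOn (fun y => β y * U y) S ∧
  ∀ᵐ x ∂(volume.restrict S),
    τ x * U x + lam * (∫ y in Set.Ioo 0 x, U y) + (∫ y in Set.Ioo 0 x, β y * U y)
      = δ + 2 * ∫ y in S, β y * U y * ((κ y) (Set.Icc 0 x)).toReal

lemma kernel_aemeas (κ : ℝ → Measure ℝ) (hK1 : K1 κ) (hκmeas : KernelMeasurable κ)
    (x : ℝ) :
    AEMeasurable (fun y => ((κ y) (Set.Icc 0 x)).toReal) (volume.restrict (Set.Ioi (0:ℝ))) := by
  rcases lt_or_ge x 0 with hx | hx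
  · have : (fun y => ((κ y) (Set.Icc 0 x)).toReal) = fun _ => (0:ℝ) := by
      funext y
      rw [Set.Icc_eq_empty (by linarith), measure_empty]
      simp
    rw [this]; exact aemeasurable_const
  · -- approximate indicator of Icc 0 x by continuous functions
    set ψ : ℕ → ℝ → ℝ := fun n z => max 0 (1 - (n+1) * Metric.infDist z (Set.Icc 0 x)) with hψ
    have hψc : ∀ n, Continuous (ψ n) := by
      intro n
      exact continuous_const.max (continuous_const.sub (continuous_const.mul
        (Metric.continuous_infDist_pt _)))
    have hψ01 : ∀ n z, 0 ≤ ψ n z ∧ ψ n z ≤ 1 := by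
      intro n z
      constructor
      · exact le_max_left _ _
      · simp only [hψ, max_le_iff]
        constructor
        · linarith
        · have : (0:ℝ) ≤ (n+1) * Metric.infDist z (Set.Icc 0 x) :=
            mul_nonneg (by positivity) Metric.infDist_nonneg
          linarith
    have hψtend : ∀ z, Tendsto (fun n => ψ n z) atTop
        (nhds ((Set.Icc 0 x).indicator (1 : ℝ → ℝ) z)) := by
      intro z
      by_cases hz : z ∈ Set.Icc 0 x
      · have : ∀ n, ψ n z = 1 := by
          intro n
          have : Metric.infDist z (Set.Icc 0 x) = 0 := by
            rw [Metric.infDist_zero_of_mem hz]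
          simp [hψ, this]
        rw [Set.indicator_of_mem hz]
        simp only [this, Pi.one_apply]
        exact tendsto_const_nhds
      · have hne : (Set.Icc (0:ℝ) x).Nonempty := ⟨0, Set.mem_Icc.2 ⟨le_refl 0, hx⟩⟩
        have hd : 0 < Metric.infDist z (Set.Icc 0 x) :=
          (IsClosed.notMem_iff_infDist_pos isClosed_Icc hne).mp hz
        have : ∀ᶠ n : ℕ in atTop, ψ n z = 0 := by
          filter_upwards [eventually_ge_atTop (Nat.ceil (1 / Metric.infDist z (Set.Icc 0 x)))]
            with n hn
          have h1 : 1 / Metric.infDist z (Set.Icc 0 x) ≤ (n:ℝ) := by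
            calc (1 / Metric.infDist z (Set.Icc 0 x)) ≤ (Nat.ceil (1 / Metric.infDist z (Set.Icc 0 x)) : ℝ) := Nat.le_ceil _
            _ ≤ n := by exact_mod_cast hn
          have : 1 ≤ (n:ℝ) * Metric.infDist z (Set.Icc 0 x) := by
            rw [div_le_iff₀ hd] at h1; linarith
          have h2 : 1 ≤ ((n:ℝ)+1) * Metric.infDist z (Set.Icc 0 x) := by nlinarith
          simp only [hψ, max_eq_left_iff]
          linarith
        rw [Set.indicator_of_notMem hz]
        exact Tendsto.congr' (by filter_upwards [this] with n hn; exact hn.symm) tendsto_const_nhds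
    apply aemeasurable_of_tendsto_metrizable_ae atTop
      (f := fun n y => ∫ z, ψ n z ∂(κ y))
    · intro n; exact (hκmeas (ψ n) (hψc n)).aemeasurable
    · filter_upwards [self_mem_ae_restrict measurableSet_Ioi] with y hy
      haveI := hK1 y hy
      have : Tendsto (fun n => ∫ z, ψ n z ∂(κ y)) atTop
          (nhds (∫ z, (Set.Icc 0 x).indicator (1 : ℝ → ℝ) z ∂(κ y))) := by
        apply tendsto_integral_of_dominated_convergence (fun _ => (1:ℝ))
        · intro n; exact ((hψc n).aestronglyMeasurable)
        · exact integrable_const 1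
        · intro n
          filter_upwards with z
          rw [Real.norm_eq_abs, abs_of_nonneg (hψ01 n z).1]
          exact (hψ01 n z).2
        · filter_upwards with z using hψtend z
      rw [integral_indicator_one measurableSet_Icc] at this
      exact this

lemma kernel_Icc_full (κ : ℝ → Measure ℝ) (hκsupp : KernelSupport κ) (hK1 : K1 κ)
    {y : ℝ} (hy : 0 < y) {x : ℝ} (hyx : y ≤ x) : κ y (Set.Icc 0 x) = 1 := by
  haveI := hK1 y hy
  have h1 : κ y (Set.Icc 0 x)ᶜ = 0 :=
    measure_mono_null (Set.compl_subset_compl.2 (Set.Icc_subset_Icc_right hyx)) (hκsupp y hy)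
  have := measure_add_measure_compl (μ := κ y) (measurableSet_Icc (a := (0:ℝ)) (b := x))
  rw [h1, add_zero] at this
  rw [this, measure_univ]

lemma kernel_aemeas_prod (κ : ℝ → Measure ℝ) (hκfin : ∀ y : ℝ, 0 < y → IsFiniteMeasure (κ y))
    (hK1 : K1 κ) (hκmeas : KernelMeasurable κ) :
    AEMeasurable (fun p : ℝ × ℝ => ((κ p.2) (Set.Icc 0 p.1)).toReal)
      ((volume.restrict (Set.Ioi (0:ℝ))).prod (volume.restrict (Set.Ioi (0:ℝ)))) := by
  set ν := volume.restrict (Set.Ioi (0:ℝ)) with hν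
  have h : ∀ q : ℚ, AEMeasurable (fun y => ((κ y) (Set.Icc 0 (q:ℝ))).toReal) ν :=
    fun q => kernel_aemeas κ hK1 hκmeas (q:ℝ)
  set m : ℚ → ℝ → ℝ := fun q => (h q).mk _ with hm
  have hm1 : ∀ q, Measurable (m q) := fun q => (h q).measurable_mk
  have hm2 : ∀ q : ℚ, ∀ᵐ y ∂ν, ((κ y) (Set.Icc 0 (q:ℝ))).toReal = m q y := fun q => (h q).ae_eq_mk
  set Fm : ℝ × ℝ → ℝ :=
    fun p => (⨅ q : ℚ, if p.1 ≤ (q:ℝ) then ENNReal.ofReal (m q p.2) else ⊤).toReal with hFm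
  have hFmm : Measurable Fm := by
    apply ENNReal.measurable_toReal.comp
    apply Measurable.iInf
    intro q
    apply Measurable.ite
    · exact measurable_fst measurableSet_Iic
    · exact ENNReal.measurable_ofReal.comp ((hm1 q).comp measurable_snd)
    · exact measurable_const
  have hgood : ∀ᵐ y ∂ν, 0 < y ∧ ∀ q : ℚ, ((κ y) (Set.Icc 0 (q:ℝ))).toReal = m q y :=
    (ae_restrict_mem measurableSet_Ioi).and (ae_all_iff.2 hm2)
  have hkey : ∀ y : ℝ, (0 < y ∧ ∀ q : ℚ, ((κ y) (Set.Icc 0 (q:ℝ))).toReal = m q y) →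
      ∀ x : ℝ, ((κ y) (Set.Icc 0 x)).toReal = Fm (x, y) := by
    rintro y ⟨hy, hq⟩ x
    haveI := hκfin y hy
    have hrw : ∀ q : ℚ, (if x ≤ (q:ℝ) then ENNReal.ofReal (m q y) else ⊤)
        = (if x ≤ (q:ℝ) then (κ y) (Set.Icc 0 (q:ℝ)) else ⊤) := by
      intro q
      split_ifs
      · rw [← hq q, ENNReal.ofReal_toReal (measure_ne_top _ _)]
      · rfl
    have hFm2 : Fm (x, y) = (⨅ q : ℚ, if x ≤ (q:ℝ) then (κ y) (Set.Icc 0 (q:ℝ)) else ⊤).toReal := by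
      rw [hFm]
      dsimp only
      exact congrArg ENNReal.toReal (iInf_congr hrw)
    rw [hFm2]
    congr 1
    apply le_antisymm
    · exact le_iInf fun q => by
        split_ifs with hxq
        · exact measure_mono (Set.Icc_subset_Icc_right hxq)
        · exact le_top
    · have hseq : ∀ n : ℕ, ∃ q : ℚ, x < (q:ℝ) ∧ (q:ℝ) < x + 1/(n+1) := by
        intro n
        exact exists_rat_btwn (by
          have : (0:ℝ) < 1/(n+1) := by positivity
          linarith)
      choose q hq1 hq2 using hseq
      have hub : ∀ n : ℕ, (⨅ q : ℚ, if x ≤ (q:ℝ) then (κ y) (Set.Icc 0 (q:ℝ)) else ⊤)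
          ≤ (κ y) (Set.Icc 0 (x + 1/(n+1))) := by
        intro n
        refine (iInf_le _ (q n)).trans ?_
        rw [if_pos (le_of_lt (hq1 n))]
        exact measure_mono (Set.Icc_subset_Icc_right (le_of_lt (hq2 n)))
      have htd : Tendsto (fun n : ℕ => (κ y) (Set.Icc 0 (x + 1/(n+1)))) atTop
          (nhds ((κ y) (⋂ n : ℕ, Set.Icc 0 (x + 1/(n+1))))) := by
        apply tendsto_measure_iInter_atTop
        · exact fun n => measurableSet_Icc.nullMeasurableSet
        · intro a b hab
          apply Set.Icc_subset_Icc_right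
          have h1 : (a:ℝ) + 1 ≤ (b:ℝ) + 1 := by have := (Nat.cast_le (α := ℝ)).2 hab; linarith
          have h2 : (0:ℝ) < a + 1 := by positivity
          have := one_div_le_one_div_of_le h2 h1
          linarith
        · exact ⟨0, measure_ne_top _ _⟩
      have hI : (⋂ n : ℕ, Set.Icc 0 (x + 1/(n+1))) = Set.Icc 0 x := by
        ext z
        simp only [Set.mem_iInter, Set.mem_Icc]
        constructor
        · rintro hz
          refine ⟨(hz 0).1, ?_⟩
          by_contra hc
          push_neg at hc
          obtain ⟨n, hn⟩ := exists_nat_one_div_lt (show (0:ℝ) < z - x by linarith)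
          have := (hz n).2
          linarith
        · rintro ⟨h0, hzx⟩ n
          have : (0:ℝ) < 1/(n+1) := by positivity
          exact ⟨h0, by linarith⟩
      rw [hI] at htd
      exact ge_of_tendsto' htd hub
  have hprodgood : ∀ᵐ p ∂(ν.prod ν),
      0 < p.2 ∧ ∀ q : ℚ, ((κ p.2) (Set.Icc 0 (q:ℝ))).toReal = m q p.2 :=
    Measure.QuasiMeasurePreserving.ae Measure.quasiMeasurePreserving_snd hgood
  refine ⟨Fm, hFmm, ?_⟩
  filter_upwards [hprodgood] with p hp
  exact hkey p.2 hp p.1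

lemma kernel_inner_integral (κ : ℝ → Measure ℝ) (hκsupp : KernelSupport κ)
    (hK1 : K1 κ) (hK2 : K2 κ) {y : ℝ} (hy : 0 < y) :
    ∫ x in Set.Ioo 0 y, ((κ y) (Set.Icc 0 x)).toReal = y / 2 := by
  haveI := hK1 y hy
  haveI : IsFiniteMeasure (volume.restrict (Set.Ioo 0 y)) := by
    constructor
    rw [Measure.restrict_apply_univ, Real.volume_Ioo]
    exact ENNReal.ofReal_lt_top
  have hA : MeasurableSet {p : ℝ × ℝ | 0 ≤ p.2 ∧ p.2 ≤ p.1} := by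
    apply MeasurableSet.inter
    · exact measurableSet_le measurable_const measurable_snd
    · exact measurableSet_le measurable_snd measurable_fst
  have hunc : Function.uncurry (fun x z => (Set.Icc (0:ℝ) x).indicator (1 : ℝ → ℝ) z)
      = ({p : ℝ × ℝ | 0 ≤ p.2 ∧ p.2 ≤ p.1}).indicator (1 : ℝ × ℝ → ℝ) := by
    funext p
    by_cases hp : p.2 ∈ Set.Icc 0 p.1
    · rw [Function.uncurry_apply_pair, Set.indicator_of_mem hp,
        Set.indicator_of_mem (by exact Set.mem_Icc.1 hp)]
      simp
    · rw [Function.uncurry_apply_pair, Set.indicator_of_notMem hp,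
        Set.indicator_of_notMem (by rw [Set.mem_Icc] at hp; exact hp)]
  have hint : Integrable
      (Function.uncurry (fun x z => (Set.Icc (0:ℝ) x).indicator (1 : ℝ → ℝ) z))
      ((volume.restrict (Set.Ioo 0 y)).prod (κ y)) := by
    rw [hunc]
    exact (integrable_const (1:ℝ)).indicator hA
  have hswap := integral_integral_swap hint
  -- LHS of hswap
  have hL : (∫ x in Set.Ioo 0 y, ∫ z, (Set.Icc (0:ℝ) x).indicator (1 : ℝ → ℝ) z ∂(κ y))
      = ∫ x in Set.Ioo 0 y, ((κ y) (Set.Icc 0 x)).toReal := by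
    apply integral_congr_ae
    filter_upwards with x
    exact integral_indicator_one measurableSet_Icc
  -- RHS of hswap
  have haez : ∀ᵐ z ∂(κ y), z ∈ Set.Icc 0 y := by
    have := hκsupp y hy
    rw [ae_iff]
    convert this using 2
    rfl
  have hR : (∫ z, ∫ x in Set.Ioo 0 y, (Set.Icc (0:ℝ) x).indicator (1 : ℝ → ℝ) z ∂volume ∂(κ y))
      = ∫ z, (y - z) ∂(κ y) := by
    apply integral_congr_ae
    filter_upwards [haez] with z hz
    rw [Set.mem_Icc] at hz
    have hfun : (fun x => (Set.Icc (0:ℝ) x).indicator (1 : ℝ → ℝ) z)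
        = (Set.Ici z).indicator (1 : ℝ → ℝ) := by
      funext x
      by_cases hzx : z ≤ x
      · rw [Set.indicator_of_mem (Set.mem_Icc.2 ⟨hz.1, hzx⟩),
          Set.indicator_of_mem (Set.mem_Ici.2 hzx)]
        simp
      · rw [Set.indicator_of_notMem (fun hc => hzx (Set.mem_Icc.1 hc).2),
          Set.indicator_of_notMem (fun hc => hzx (Set.mem_Ici.1 hc))]
    rw [hfun, integral_indicator_one measurableSet_Ici, measureReal_def, Measure.restrict_apply measurableSet_Ici]
    have hvol : volume (Set.Ici z ∩ Set.Ioo 0 y) = ENNReal.ofReal (y - z) := by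
      apply le_antisymm
      · calc volume (Set.Ici z ∩ Set.Ioo 0 y) ≤ volume (Set.Icc z y) := by
              apply measure_mono
              rintro w ⟨hw1, hw2, hw3⟩
              exact Set.mem_Icc.2 ⟨hw1, le_of_lt hw3⟩
        _ = ENNReal.ofReal (y - z) := Real.volume_Icc
      · calc ENNReal.ofReal (y - z) = volume (Set.Ioo z y) := Real.volume_Ioo.symm
        _ ≤ volume (Set.Ici z ∩ Set.Ioo 0 y) := by
              apply measure_mono
              rintro w hw
              rw [Set.mem_Ioo] at hw
              exact ⟨le_of_lt hw.1, lt_of_le_of_lt hz.1 hw.1, hw.2⟩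
    rw [hvol, ENNReal.toReal_ofReal (by linarith [hz.2])]
  have hzint : Integrable (fun z => z) (κ y) := by
    apply (integrable_const y).mono' aestronglyMeasurable_id
    filter_upwards [haez] with z hz
    rw [Set.mem_Icc] at hz
    show ‖z‖ ≤ y
    rw [Real.norm_eq_abs, abs_of_nonneg hz.1]
    exact hz.2
  have hval : (∫ z, (y - z) ∂(κ y)) = y / 2 := by
    rw [integral_sub (integrable_const y) hzint, integral_const, hK2 y hy, measureReal_def, measure_univ]
    simp
    ring
  rw [← hL, hswap, hR, hval]

/-- **Non-existence for affine growth `τ(x)=τ₀+τ₁x` and constant fragmentation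
`β ≡ β₀`.** A normalised nonnegative decaying solution of the eigenproblem on
`(0,∞)` in integrated form with `xU ∈ L¹` satisfies `λ = β₀` and
`(β₀-τ₁)∫xU = τ₀`; in particular `τ₁ < β₀`, so for `τ₁ ≥ β₀` no such solution
exists. -/
theorem nonexistence_affine_growth_constant_fragmentation
    (τ₀ τ₁ β₀ : ℝ) (hτ₀ : 0 < τ₀) (hτ₁ : 0 ≤ τ₁) (hβ₀ : 0 < β₀)
    (κ : ℝ → Measure ℝ)
    (hκfin : ∀ y : ℝ, 0 < y → IsFiniteMeasure (κ y))
    (hκsupp : KernelSupport κ) (hκmeas : KernelMeasurable κ)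
    (hK1 : K1 κ) (hK2 : K2 κ)
    (lam : ℝ) (U : ℝ → ℝ)
    (hTE : TruncEigen (fun x => τ₀ + τ₁ * x) (fun _ => β₀) κ 0 (Set.Ioi 0) lam U)
    (hU0 : ∀ᵐ x ∂(volume.restrict (Set.Ioi (0:ℝ))), 0 ≤ U x)
    (hUnorm : ∫ x in Set.Ioi (0:ℝ), U x = 1)
    (hxU : IntegrableOn (fun x => x * U x) (Set.Ioi 0))
    (hlim1 : Tendsto (fun x => (τ₀ + τ₁ * x) * U x) atTop (nhds 0))
    (hlim2 : Tendsto (fun x => x * ((τ₀ + τ₁ * x) * U x)) atTop (nhds 0)) :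
    lam = β₀ ∧ (β₀ - τ₁) * (∫ x in Set.Ioi (0:ℝ), x * U x) = τ₀ ∧ τ₁ < β₀ := by
  classical
  obtain ⟨hUint, hbUint, heq⟩ := hTE
  set ν := volume.restrict (Set.Ioi (0:ℝ)) with hνdef
  have hνIci : ∀ c : ℝ, 1 ≤ c → ν (Set.Ici c) = ⊤ := by
    intro c hc
    rw [hνdef, Measure.restrict_apply measurableSet_Ici]
    have hss : Set.Ici c ∩ Set.Ioi 0 = Set.Ici c :=
      Set.inter_eq_left.2 (fun x hx => lt_of_lt_of_le zero_lt_one (le_trans hc hx))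
    rw [hss, Real.volume_Ici]
  have hF01 : ∀ x : ℝ, ∀ y : ℝ, 0 < y →
      0 ≤ ((κ y) (Set.Icc 0 x)).toReal ∧ ((κ y) (Set.Icc 0 x)).toReal ≤ 1 := by
    intro x y hy
    haveI := hK1 y hy
    refine ⟨ENNReal.toReal_nonneg, ?_⟩
    have h1 : (κ y) (Set.Icc 0 x) ≤ 1 := by
      rw [← measure_univ (μ := κ y)]
      exact measure_mono (Set.subset_univ _)
    calc ((κ y) (Set.Icc 0 x)).toReal ≤ (1 : ℝ≥0∞).toReal :=
          ENNReal.toReal_mono ENNReal.one_ne_top h1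
      _ = 1 := ENNReal.toReal_one
  -- convergence of ∫_{(0,x)} U to 1
  have hUnionR : (⋃ x : ℝ, Set.Ioo (0:ℝ) x) = Set.Ioi 0 := by
    ext z
    simp only [Set.mem_iUnion, Set.mem_Ioo, Set.mem_Ioi]
    exact ⟨fun ⟨x, h1, _⟩ => h1, fun hz => ⟨z + 1, hz, by linarith⟩⟩
  have hAtend : Tendsto (fun x : ℝ => ∫ y in Set.Ioo 0 x, U y) atTop (nhds 1) := by
    have := tendsto_setIntegral_of_monotone (μ := volume) (f := U)
      (fun x : ℝ => measurableSet_Ioo)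
      (fun a b hab => Set.Ioo_subset_Ioo_right hab) (by rw [hUnionR]; exact hUint)
    rw [hUnionR, hUnorm] at this
    exact this
  -- the G-integrand
  have hFaem : ∀ x : ℝ, AEMeasurable (fun y => ((κ y) (Set.Icc 0 x)).toReal) ν :=
    fun x => kernel_aemeas κ hK1 hκmeas x
  have hGasm : ∀ x : ℝ,
      AEStronglyMeasurable (fun y => β₀ * U y * ((κ y) (Set.Icc 0 x)).toReal) ν :=
    fun x => hbUint.aestronglyMeasurable.mul (hFaem x).aestronglyMeasurable
  have hGbd : ∀ x : ℝ, ∀ᵐ y ∂ν, ‖β₀ * U y * ((κ y) (Set.Icc 0 x)).toReal‖ ≤ β₀ * U y := by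
    intro x
    filter_upwards [hU0, ae_restrict_mem measurableSet_Ioi] with y hy0 hy
    have hF := hF01 x y hy
    rw [Real.norm_eq_abs, abs_of_nonneg (mul_nonneg (mul_nonneg hβ₀.le hy0) hF.1)]
    calc β₀ * U y * ((κ y) (Set.Icc 0 x)).toReal ≤ β₀ * U y * 1 :=
          mul_le_mul_of_nonneg_left hF.2 (mul_nonneg hβ₀.le hy0)
      _ = β₀ * U y := mul_one _
  have hGint : ∀ x : ℝ, Integrable (fun y => β₀ * U y * ((κ y) (Set.Icc 0 x)).toReal) ν :=
    fun x => hbUint.mono' (hGasm x) (hGbd x)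
  have hGtend : Tendsto
      (fun x : ℝ => ∫ y in Set.Ioi 0, β₀ * U y * ((κ y) (Set.Icc 0 x)).toReal)
      atTop (nhds β₀) := by
    have h2 : (∫ y in Set.Ioi 0, β₀ * U y) = β₀ := by
      rw [integral_const_mul, hUnorm, mul_one]
    have h1 : Tendsto
        (fun x : ℝ => ∫ y in Set.Ioi 0, β₀ * U y * ((κ y) (Set.Icc 0 x)).toReal)
        atTop (nhds (∫ y in Set.Ioi 0, β₀ * U y)) := by
      apply tendsto_integral_filter_of_dominated_convergence (fun y => β₀ * U y)
        (Eventually.of_forall hGasm) (Eventually.of_forall hGbd) hbUint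
      filter_upwards [ae_restrict_mem measurableSet_Ioi] with y hy
      have hcongr : (fun _ : ℝ => β₀ * U y) =ᶠ[atTop]
          (fun x : ℝ => β₀ * U y * ((κ y) (Set.Icc 0 x)).toReal) := by
        filter_upwards [eventually_ge_atTop y] with x hx
        rw [kernel_Icc_full κ hκsupp hK1 hy hx, ENNReal.toReal_one, mul_one]
      exact Tendsto.congr' hcongr tendsto_const_nhds
    rw [h2] at h1
    exact h1
  -- the a.e. equation, rewritten
  have hβA : ∀ x : ℝ, (∫ y in Set.Ioo 0 x, β₀ * U y) = β₀ * ∫ y in Set.Ioo 0 x, U y :=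
    fun x => integral_const_mul _ _
  set Φ : ℝ → ℝ := fun x => (τ₀ + τ₁ * x) * U x + lam * (∫ y in Set.Ioo 0 x, U y)
      + β₀ * (∫ y in Set.Ioo 0 x, U y)
      - 2 * (∫ y in Set.Ioi 0, β₀ * U y * ((κ y) (Set.Icc 0 x)).toReal) with hΦdef
  have hΦ0 : ∀ᵐ x ∂ν, Φ x = 0 := by
    filter_upwards [heq] with x hx
    rw [hβA x] at hx
    rw [hΦdef]
    dsimp only
    linarith
  have hΦtend : Tendsto Φ atTop (nhds (0 + lam * 1 + β₀ * 1 - 2 * β₀)) := by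
    rw [hΦdef]
    exact ((hlim1.add (hAtend.const_mul lam)).add (hAtend.const_mul β₀)).sub
      (hGtend.const_mul 2)
  have hlam : lam = β₀ := by
    by_contra hc
    have hL : (0 + lam * 1 + β₀ * 1 - 2 * β₀) ≠ 0 := by
      intro h
      apply hc
      linarith
    have hne := hΦtend.eventually_ne hL
    obtain ⟨M, hM⟩ := eventually_atTop.1 hne
    have h0 : ν {x | ¬ Φ x = 0} = 0 := by
      rw [ae_iff] at hΦ0
      exact hΦ0
    have hsub : Set.Ici (max M 1) ⊆ {x | ¬ Φ x = 0} :=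
      fun x hx => hM x (le_trans (le_max_left _ _) hx)
    have := measure_mono_null hsub h0
    rw [hνIci _ (le_max_right M 1)] at this
    exact ENNReal.top_ne_zero this
  -- Step 2
  set g : ℝ → ℝ → ℝ := fun x y => β₀ * U y * ((κ y) (Set.Icc 0 x)).toReal
      - (Set.Ioo 0 x).indicator (fun z => β₀ * U z) y with hgdef
  have hasm : AEStronglyMeasurable (Function.uncurry g) (ν.prod ν) := by
    have h1 : AEStronglyMeasurable (fun p : ℝ × ℝ => β₀ * U p.2) (ν.prod ν) :=
      hbUint.aestronglyMeasurable.comp_snd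
    have h2 : AEStronglyMeasurable
        (fun p : ℝ × ℝ => β₀ * U p.2 * ((κ p.2) (Set.Icc 0 p.1)).toReal) (ν.prod ν) :=
      h1.mul (kernel_aemeas_prod κ hκfin hK1 hκmeas).aestronglyMeasurable
    have hset : MeasurableSet {p : ℝ × ℝ | 0 < p.2 ∧ p.2 < p.1} :=
      (measurableSet_lt measurable_const measurable_snd).inter
        (measurableSet_lt measurable_snd measurable_fst)
    have h3' : (fun p : ℝ × ℝ => (Set.Ioo 0 p.1).indicator (fun z => β₀ * U z) p.2)
        = Set.indicator {p : ℝ × ℝ | 0 < p.2 ∧ p.2 < p.1} (fun p => β₀ * U p.2) := by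
      funext p
      by_cases hp : p.2 ∈ Set.Ioo 0 p.1
      · rw [Set.indicator_of_mem hp, Set.indicator_of_mem (by exact hp)]
      · rw [Set.indicator_of_notMem hp, Set.indicator_of_notMem (by exact hp)]
    have h3 : AEStronglyMeasurable
        (fun p : ℝ × ℝ => (Set.Ioo 0 p.1).indicator (fun z => β₀ * U z) p.2) (ν.prod ν) := by
      rw [h3']
      exact h1.indicator hset
    exact h2.sub h3
  have hFmono : ∀ y : ℝ, 0 < y → Monotone (fun x : ℝ => ((κ y) (Set.Icc 0 x)).toReal) := by
    intro y hy
    haveI := hκfin y hy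
    intro a b hab
    exact ENNReal.toReal_mono (measure_ne_top _ _)
      (measure_mono (Set.Icc_subset_Icc_right hab))
  have hind_eq : ∀ y : ℝ, 0 < y →
      (fun x : ℝ => (Set.Ioo 0 x).indicator (fun z => β₀ * U z) y)
      = (Set.Ioi y).indicator (fun _ => β₀ * U y) := by
    intro y hy
    funext x
    by_cases hyx : y < x
    · rw [Set.indicator_of_mem (Set.mem_Ioo.2 ⟨hy, hyx⟩),
        Set.indicator_of_mem (Set.mem_Ioi.2 hyx)]
    · rw [Set.indicator_of_notMem (fun hc => hyx (Set.mem_Ioo.1 hc).2),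
        Set.indicator_of_notMem (fun hc => hyx (Set.mem_Ioi.1 hc))]
  have hsliceasm : ∀ y : ℝ, 0 < y → AEStronglyMeasurable (fun x => g x y) ν := by
    intro y hy
    show AEStronglyMeasurable (fun x => β₀ * U y * ((κ y) (Set.Icc 0 x)).toReal
      - (Set.Ioo 0 x).indicator (fun z => β₀ * U z) y) ν
    apply AEStronglyMeasurable.sub
    · exact (measurable_const.mul (hFmono y hy).measurable).aestronglyMeasurable
    · rw [hind_eq y hy]
      exact (measurable_const.indicator measurableSet_Ioi).aestronglyMeasurable
  have hgzero : ∀ y : ℝ, 0 < y → ∀ x : ℝ, y < x → g x y = 0 := by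
    intro y hy x hyx
    show β₀ * U y * ((κ y) (Set.Icc 0 x)).toReal
      - (Set.Ioo 0 x).indicator (fun z => β₀ * U z) y = 0
    rw [kernel_Icc_full κ hκsupp hK1 hy hyx.le, ENNReal.toReal_one, mul_one,
      Set.indicator_of_mem (Set.mem_Ioo.2 ⟨hy, hyx⟩), sub_self]
  have hgbd : ∀ y : ℝ, 0 < y → ∀ x : ℝ, 0 < x →
      ‖g x y‖ ≤ (Set.Ioc 0 y).indicator (fun _ => 2 * (β₀ * |U y|)) x := by
    intro y hy x hx
    rcases le_or_gt x y with hxy | hxy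
    · rw [Set.indicator_of_mem (Set.mem_Ioc.2 ⟨hx, hxy⟩)]
      have hF := hF01 x y hy
      have hna : ‖β₀ * U y * ((κ y) (Set.Icc 0 x)).toReal‖ ≤ β₀ * |U y| := by
        rw [Real.norm_eq_abs, abs_mul, abs_mul, abs_of_nonneg hβ₀.le, abs_of_nonneg hF.1]
        have := mul_le_mul_of_nonneg_left hF.2 (mul_nonneg hβ₀.le (abs_nonneg (U y)))
        simpa using this
      have hnb : ‖(Set.Ioo 0 x).indicator (fun z => β₀ * U z) y‖ ≤ β₀ * |U y| := by
        by_cases hm : y ∈ Set.Ioo 0 x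
        · rw [Set.indicator_of_mem hm, Real.norm_eq_abs, abs_mul, abs_of_nonneg hβ₀.le]
        · rw [Set.indicator_of_notMem hm, norm_zero]
          positivity
      calc ‖g x y‖ ≤ ‖β₀ * U y * ((κ y) (Set.Icc 0 x)).toReal‖
            + ‖(Set.Ioo 0 x).indicator (fun z => β₀ * U z) y‖ := norm_sub_le _ _
        _ ≤ β₀ * |U y| + β₀ * |U y| := add_le_add hna hnb
        _ = 2 * (β₀ * |U y|) := by ring
    · rw [hgzero y hy x hxy, norm_zero]
      exact Set.indicator_nonneg (fun _ _ => by positivity) x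
  have hDint : ∀ y : ℝ, 0 < y →
      Integrable ((Set.Ioc 0 y).indicator (fun _ => 2 * (β₀ * |U y|))) ν := by
    intro y hy
    apply IntegrableOn.integrable_indicator _ measurableSet_Ioc
    refine integrableOn_const (ne_of_lt ?_)
    rw [hνdef, Measure.restrict_apply measurableSet_Ioc]
    calc volume (Set.Ioc 0 y ∩ Set.Ioi 0) ≤ volume (Set.Ioc 0 y) :=
          measure_mono Set.inter_subset_left
      _ < ⊤ := by rw [Real.volume_Ioc]; exact ENNReal.ofReal_lt_top
  have hslice0 : ∀ y : ℝ, 0 < y → Integrable (fun x => g x y) ν := by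
    intro y hy
    apply (hDint y hy).mono' (hsliceasm y hy)
    filter_upwards [ae_restrict_mem measurableSet_Ioi] with x hx
    exact hgbd y hy x hx
  have hnormasm : AEStronglyMeasurable (fun y => ∫ x, ‖g x y‖ ∂ν) ν :=
    (hasm.norm.prod_swap).integral_prod_right'
  have hnormbd : ∀ᵐ y ∂ν, ‖∫ x, ‖g x y‖ ∂ν‖ ≤ 2 * β₀ * (|U y| * y) := by
    filter_upwards [ae_restrict_mem measurableSet_Ioi] with y hy
    rw [Real.norm_eq_abs, abs_of_nonneg (integral_nonneg (fun x => norm_nonneg _))]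
    have h1 : (∫ x, ‖g x y‖ ∂ν)
        ≤ ∫ x, (Set.Ioc 0 y).indicator (fun _ => 2 * (β₀ * |U y|)) x ∂ν := by
      apply integral_mono_ae (hslice0 y hy).norm (hDint y hy)
      filter_upwards [ae_restrict_mem measurableSet_Ioi] with x hx
      exact hgbd y hy x hx
    have h2 : (∫ x, (Set.Ioc 0 y).indicator (fun _ => 2 * (β₀ * |U y|)) x ∂ν)
        = (ν (Set.Ioc 0 y)).toReal * (2 * (β₀ * |U y|)) := by
      rw [integral_indicator measurableSet_Ioc, setIntegral_const, smul_eq_mul, measureReal_def]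
    have h3 : (ν (Set.Ioc 0 y)).toReal ≤ y := by
      rw [hνdef, Measure.restrict_apply measurableSet_Ioc]
      calc (volume (Set.Ioc 0 y ∩ Set.Ioi 0)).toReal ≤ (volume (Set.Ioc 0 y)).toReal := by
            apply ENNReal.toReal_mono
            · rw [Real.volume_Ioc]; exact ENNReal.ofReal_ne_top
            · exact measure_mono Set.inter_subset_left
        _ = y := by
            rw [Real.volume_Ioc, ENNReal.toReal_ofReal (by linarith [Set.mem_Ioi.1 hy]),
              sub_zero]
    calc (∫ x, ‖g x y‖ ∂ν) ≤ (ν (Set.Ioc 0 y)).toReal * (2 * (β₀ * |U y|)) := by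
          rw [← h2]; exact h1
      _ ≤ y * (2 * (β₀ * |U y|)) := mul_le_mul_of_nonneg_right h3 (by positivity)
      _ = 2 * β₀ * (|U y| * y) := by ring
  have hbound_int : Integrable (fun y => 2 * β₀ * (|U y| * y)) ν := by
    apply (hxU.const_mul (2 * β₀)).congr
    filter_upwards [hU0, ae_restrict_mem measurableSet_Ioi] with y h1 h2
    rw [abs_of_nonneg h1]
    ring
  have hnormint : Integrable (fun y => ∫ x, ‖g x y‖ ∂ν) ν :=
    hbound_int.mono' hnormasm hnormbd
  have hslice_ae : ∀ᵐ y ∂ν, Integrable (fun x => g x y) ν := by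
    filter_upwards [ae_restrict_mem measurableSet_Ioi] with y hy using hslice0 y hy
  have hIntg : Integrable (Function.uncurry g) (ν.prod ν) :=
    (integrable_prod_iff' hasm).2 ⟨hslice_ae, hnormint⟩
  have hswap : (∫ x, ∫ y, g x y ∂ν ∂ν) = ∫ y, ∫ x, g x y ∂ν ∂ν :=
    integral_integral_swap hIntg
  have hIndInt : ∀ x : ℝ,
      Integrable (fun y => (Set.Ioo 0 x).indicator (fun z => β₀ * U z) y) ν :=
    fun x => (hbUint.integrableOn).integrable_indicator measurableSet_Ioo
  have hIndVal : ∀ x : ℝ, (∫ y, (Set.Ioo 0 x).indicator (fun z => β₀ * U z) y ∂ν)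
      = β₀ * ∫ y in Set.Ioo 0 x, U y := by
    intro x
    have hss : Set.Ioo (0:ℝ) x ∩ Set.Ioi 0 = Set.Ioo 0 x :=
      Set.inter_eq_left.2 (fun z hz => (Set.mem_Ioo.1 hz).1)
    rw [integral_indicator measurableSet_Ioo, hνdef,
      Measure.restrict_restrict measurableSet_Ioo, hss]
    exact hβA x
  have hLHS : ∀ᵐ x ∂ν, (τ₀ + τ₁ * x) * U x = 2 * ∫ y, g x y ∂ν := by
    filter_upwards [heq] with x hx
    rw [hβA x, hlam] at hx
    have hsplit : (∫ y, g x y ∂ν)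
        = (∫ y in Set.Ioi 0, β₀ * U y * ((κ y) (Set.Icc 0 x)).toReal)
          - β₀ * ∫ y in Set.Ioo 0 x, U y := by
      show (∫ y, (β₀ * U y * ((κ y) (Set.Icc 0 x)).toReal
          - (Set.Ioo 0 x).indicator (fun z => β₀ * U z) y) ∂ν) = _
      rw [integral_sub (hGint x) (hIndInt x), hIndVal x]
    rw [hsplit]
    linarith
  have hinner : ∀ᵐ y ∂ν, (∫ x, g x y ∂ν) = β₀ * U y * (y / 2) := by
    filter_upwards [ae_restrict_mem measurableSet_Ioi] with y hy
    have hy' : (0:ℝ) < y := hy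
    have hIg : IntegrableOn (fun x => g x y) (Set.Ioi 0) volume := hslice0 y hy'
    have hun : Set.Ioo (0:ℝ) y ∪ Set.Ici y = Set.Ioi 0 := by
      ext x
      simp only [Set.mem_union, Set.mem_Ioo, Set.mem_Ici, Set.mem_Ioi]
      constructor
      · rintro (⟨h1, _⟩ | h1)
        · exact h1
        · exact lt_of_lt_of_le hy' h1
      · intro hx
        rcases lt_or_ge x y with h | h
        · exact Or.inl ⟨hx, h⟩
        · exact Or.inr h
    have hdisj : Disjoint (Set.Ioo (0:ℝ) y) (Set.Ici y) := by
      apply Set.disjoint_left.2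
      rintro x ⟨_, h2⟩ h3
      exact absurd h3 (not_le.2 h2)
    have hsplit : (∫ x, g x y ∂ν)
        = (∫ x in Set.Ioo 0 y, g x y) + ∫ x in Set.Ici y, g x y := by
      show (∫ x in Set.Ioi 0, g x y) = _
      rw [← hun, setIntegral_union hdisj measurableSet_Ici
        (hIg.mono_set (by rw [← hun]; exact Set.subset_union_left))
        (hIg.mono_set (by rw [← hun]; exact Set.subset_union_right))]
    have hIci : (∫ x in Set.Ici y, g x y) = 0 := by
      have hae : (fun x => g x y) =ᵐ[volume.restrict (Set.Ici y)] 0 := by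
        have h0 : (volume.restrict (Set.Ici y)) {y} = 0 := by
          rw [Measure.restrict_apply (measurableSet_singleton y)]
          exact measure_mono_null Set.inter_subset_left Real.volume_singleton
        have hne : ∀ᵐ x ∂(volume.restrict (Set.Ici y)), x ≠ y := by
          rw [ae_iff]
          convert h0 using 2
          ext x
          simp
        filter_upwards [hne, ae_restrict_mem measurableSet_Ici] with x hxy hxmem
        have hyx : y < x := lt_of_le_of_ne hxmem (Ne.symm hxy)
        exact hgzero y hy' x hyx
      rw [integral_congr_ae hae]
      simp
    have hIoo : (∫ x in Set.Ioo 0 y, g x y) = β₀ * U y * (y / 2) := by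
      have heqon : Set.EqOn (fun x => g x y)
          (fun x => β₀ * U y * ((κ y) (Set.Icc 0 x)).toReal) (Set.Ioo 0 y) := by
        intro x hx
        show β₀ * U y * ((κ y) (Set.Icc 0 x)).toReal
          - (Set.Ioo 0 x).indicator (fun z => β₀ * U z) y = _
        rw [Set.indicator_of_notMem (fun hc => lt_asymm (Set.mem_Ioo.1 hx).2
          (Set.mem_Ioo.1 hc).2), sub_zero]
      rw [setIntegral_congr_fun measurableSet_Ioo heqon, integral_const_mul,
        kernel_inner_integral κ hκsupp hK1 hK2 hy']
    rw [hsplit, hIci, hIoo, add_zero]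
  have hτint : (∫ x in Set.Ioi 0, (τ₀ + τ₁ * x) * U x)
      = τ₀ + τ₁ * ∫ x in Set.Ioi 0, x * U x := by
    have h1 : (∫ x in Set.Ioi 0, (τ₀ + τ₁ * x) * U x)
        = ∫ x in Set.Ioi 0, (τ₀ * U x + τ₁ * (x * U x)) :=
      integral_congr_ae (Eventually.of_forall fun x => by ring)
    rw [h1, integral_add (hUint.const_mul τ₀) (hxU.const_mul τ₁), integral_const_mul,
      integral_const_mul, hUnorm, mul_one]
  have hmain : (∫ x in Set.Ioi 0, (τ₀ + τ₁ * x) * U x)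
      = β₀ * ∫ x in Set.Ioi 0, x * U x := by
    have h1 : (∫ x in Set.Ioi 0, (τ₀ + τ₁ * x) * U x) = ∫ x, 2 * ∫ y, g x y ∂ν ∂ν :=
      integral_congr_ae hLHS
    have h2 : (∫ x, 2 * (∫ y, g x y ∂ν) ∂ν) = 2 * ∫ x, (∫ y, g x y ∂ν) ∂ν :=
      integral_const_mul _ _
    have h3 : (∫ y, (∫ x, g x y ∂ν) ∂ν) = ∫ y, β₀ * U y * (y / 2) ∂ν :=
      integral_congr_ae hinner
    have h4 : (∫ y, β₀ * U y * (y / 2) ∂ν) = (β₀ / 2) * ∫ y in Set.Ioi 0, y * U y := by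
      rw [show (fun y => β₀ * U y * (y / 2)) = fun y => (β₀ / 2) * (y * U y) from
        funext fun y => by ring]
      exact integral_const_mul _ _
    rw [h1, h2, hswap, h3, h4]
    ring
  have hI0 : 0 ≤ ∫ x in Set.Ioi 0, x * U x := by
    apply integral_nonneg_of_ae
    filter_upwards [hU0, ae_restrict_mem measurableSet_Ioi] with x h1 h2
    exact mul_nonneg (le_of_lt h2) h1
  have h5 : τ₀ + τ₁ * (∫ x in Set.Ioi 0, x * U x) = β₀ * ∫ x in Set.Ioi 0, x * U x := by
    rw [← hτint, hmain]
  have hkey : (β₀ - τ₁) * (∫ x in Set.Ioi 0, x * U x) = τ₀ := by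
    have h6 : (β₀ - τ₁) * (∫ x in Set.Ioi 0, x * U x)
        = β₀ * (∫ x in Set.Ioi 0, x * U x) - τ₁ * (∫ x in Set.Ioi 0, x * U x) := by ring
    rw [h6]
    linarith
  refine ⟨hlam, hkey, ?_⟩
  by_contra hc
  push_neg at hc
  have h7 : 0 ≤ (τ₁ - β₀) * (∫ x in Set.Ioi 0, x * U x) :=
    mul_nonneg (sub_nonneg.2 hc) hI0
  have h8 : (β₀ - τ₁) * (∫ x in Set.Ioi 0, x * U x)
      = -((τ₁ - β₀) * (∫ x in Set.Ioi 0, x * U x)) := by ring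
  rw [h8] at hkey
  linarith
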